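/- Let Y be a complex 3×3 matrix with SVD Y = U_L · diag(y₁, y₂, y₃) · U_R†, 0 ≤ y₁ ≤ y₂ ≤ y₃, y₃² > 2y₂². Let β index a longest column of Y, define the unit vector u with components uᵢ = Y_{iβ}/√((Y†Y)_{ββ}) (assuming (Y†Y)_{ββ} > 0), and set V_{i3} = (U_L† u)ᵢ. Then for i = 1, 2: |V_{i3}|² ≤ X (yᵢ/y₃)², and 1 − |V_{33}|² ≤ X (y₂/y₃)², where X = (2y₃² − y₂²)/(y₃² − 2y₂²). -/
import Mathlib

open Matrix

set_option maxHeartbeats 1000000 in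
/-- Third-column bounds of Theorem 5: the normalized longest column u of Y satisfies
`|(U_L† u)ᵢ|² ≤ X (yᵢ/y₃)²` for i = 1,2 and `1 − |(U_L† u)₃|² ≤ X (y₂/y₃)²`. -/
theorem normalized_longest_column_overlap_bounds
    (Y U_L U_R : Matrix (Fin 3) (Fin 3) ℂ) (y : Fin 3 → ℝ) (β : Fin 3)
    (hUL : U_L ∈ Matrix.unitaryGroup (Fin 3) ℂ)
    (hUR : U_R ∈ Matrix.unitaryGroup (Fin 3) ℂ)
    (hy0 : 0 ≤ y 0) (h01 : y 0 ≤ y 1) (h12 : y 1 ≤ y 2)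
    (hgap : 2 * (y 1)^2 < (y 2)^2)
    (hSVD : Y = U_L * Matrix.diagonal (fun i => (y i : ℂ)) * U_Rᴴ)
    (hβ : ∀ j, ∑ k, ‖Y k j‖^2 ≤ ∑ k, ‖Y k β‖^2)
    (hN : 0 < ∑ k, ‖Y k β‖^2)
    (u : Fin 3 → ℂ)
    (hu : ∀ i, u i = Y i β / ((Real.sqrt (∑ k, ‖Y k β‖^2) : ℝ) : ℂ)) :
    ‖(U_Lᴴ *ᵥ u) 0‖^2 ≤ (2 * (y 2)^2 - (y 1)^2) / ((y 2)^2 - 2 * (y 1)^2) * (y 0 / y 2)^2 ∧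
    ‖(U_Lᴴ *ᵥ u) 1‖^2 ≤ (2 * (y 2)^2 - (y 1)^2) / ((y 2)^2 - 2 * (y 1)^2) * (y 1 / y 2)^2 ∧
    1 - ‖(U_Lᴴ *ᵥ u) 2‖^2 ≤ (2 * (y 2)^2 - (y 1)^2) / ((y 2)^2 - 2 * (y 1)^2) * (y 1 / y 2)^2 := by
  set s : ℝ := ∑ k, ‖Y k β‖^2 with hs_def
  have hULs : U_Lᴴ * U_L = 1 := by
    simpa [Matrix.star_eq_conjTranspose] using hUL.1
  -- Gram matrix identity
  have hQ : Yᴴ * Y = U_R * Matrix.diagonal (fun i => ((y i : ℝ) : ℂ)^2) * U_Rᴴ := by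
    have hD : (Matrix.diagonal fun i => (y i : ℂ))ᴴ * (Matrix.diagonal fun i => (y i : ℂ))
        = Matrix.diagonal (fun i => ((y i : ℝ):ℂ)^2) := by
      rw [Matrix.diagonal_conjTranspose, Matrix.diagonal_mul_diagonal]
      congr 1; funext i; simp [Pi.star_apply, sq]
    rw [hSVD]
    simp only [Matrix.conjTranspose_mul, Matrix.conjTranspose_conjTranspose]
    simp only [Matrix.mul_assoc]
    rw [← Matrix.mul_assoc U_Lᴴ U_L, hULs, one_mul,
      ← Matrix.mul_assoc _ (Matrix.diagonal fun i => (y i : ℂ)), hD]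
  -- column norms via U_R
  have hcolnorm : ∀ j, ∑ k, ‖Y k j‖^2 = ∑ i, (y i)^2 * ‖U_R j i‖^2 := by
    intro j
    have h1 : (Yᴴ * Y) j j = ((∑ k, ‖Y k j‖^2 : ℝ) : ℂ) := by
      simp only [Matrix.mul_apply, Matrix.conjTranspose_apply]
      push_cast
      exact Finset.sum_congr rfl fun k _ => by simpa using RCLike.conj_mul (Y k j)
    have h2 : (Yᴴ * Y) j j = ((∑ i, (y i)^2 * ‖U_R j i‖^2 : ℝ) : ℂ) := by
      rw [hQ, Matrix.mul_apply]
      push_cast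
      refine Finset.sum_congr rfl fun i _ => ?_
      rw [Matrix.mul_diagonal, Matrix.conjTranspose_apply]
      have : U_R j i * star (U_R j i) = ((‖U_R j i‖^2 : ℝ) : ℂ) := by
        simpa using RCLike.mul_conj (U_R j i)
      push_cast at this ⊢
      calc U_R j i * ((y i : ℂ))^2 * star (U_R j i)
          = ((y i : ℂ))^2 * (U_R j i * star (U_R j i)) := by ring
        _ = ((y i : ℂ))^2 * (‖U_R j i‖:ℂ)^2 := by rw [this]
    exact_mod_cast h1.symm.trans h2
  set a : Fin 3 → ℝ := fun i => ‖U_R β i‖^2 with ha_def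
  have ha0 : 0 ≤ a 0 := sq_nonneg _
  have ha1 : 0 ≤ a 1 := sq_nonneg _
  have ha2 : 0 ≤ a 2 := sq_nonneg _
  have hs : s = (y 0)^2 * a 0 + (y 1)^2 * a 1 + (y 2)^2 * a 2 := by
    rw [hs_def, hcolnorm β, Fin.sum_univ_three]
  -- row β of U_R is a unit vector
  have ha_sum : a 0 + a 1 + a 2 = 1 := by
    have h := congrArg (fun M => M β β) hUR.2
    simp only [Matrix.mul_apply, Matrix.one_apply_eq] at h
    have h' : ((∑ i, ‖U_R β i‖^2 : ℝ) : ℂ) = 1 := by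
      rw [← h]
      push_cast
      exact (Finset.sum_congr rfl fun i _ => by
        simpa [Matrix.star_eq_conjTranspose, Matrix.conjTranspose_apply]
          using (RCLike.mul_conj (U_R β i)).symm)
    have h'' : (∑ i, ‖U_R β i‖^2 : ℝ) = 1 := by exact_mod_cast h'
    rw [Fin.sum_univ_three] at h''
    exact h''
  -- columns of U_R are unit vectors
  have hcolsum : ∀ i, ∑ j, ‖U_R j i‖^2 = 1 := by
    intro i
    have h := congrArg (fun M => M i i) hUR.1
    simp only [Matrix.mul_apply, Matrix.one_apply_eq] at h
    have h' : ((∑ j, ‖U_R j i‖^2 : ℝ) : ℂ) = 1 := by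
      rw [← h]
      push_cast
      exact (Finset.sum_congr rfl fun j _ => by
        simpa [Matrix.star_eq_conjTranspose, Matrix.conjTranspose_apply]
          using (RCLike.conj_mul (U_R j i)).symm)
    exact_mod_cast h'
  -- trace bound : sum of squared singular values ≤ 3 s
  have h3s : (y 0)^2 + (y 1)^2 + (y 2)^2 ≤ 3 * s := by
    have hcol : ∀ j, ∑ i, (y i)^2 * ‖U_R j i‖^2 ≤ s := fun j => (hcolnorm j) ▸ hβ j
    have htr : ∑ j, ∑ i, (y i)^2 * ‖U_R j i‖^2 = (y 0)^2 + (y 1)^2 + (y 2)^2 := by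
      rw [Finset.sum_comm]
      have : ∀ i, ∑ j, (y i)^2 * ‖U_R j i‖^2 = (y i)^2 := by
        intro i; rw [← Finset.mul_sum, hcolsum i, mul_one]
      simp only [this, Fin.sum_univ_three]
    calc (y 0)^2 + (y 1)^2 + (y 2)^2 = ∑ j, ∑ i, (y i)^2 * ‖U_R j i‖^2 := htr.symm
      _ ≤ ∑ _j : Fin 3, s := Finset.sum_le_sum fun j _ => hcol j
      _ = 3 * s := by rw [Fin.sum_univ_three]; ring
  -- components of U_Lᴴ u
  have hDY : U_Lᴴ * Y = Matrix.diagonal (fun i => (y i:ℂ)) * U_Rᴴ := by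
    rw [hSVD, ← Matrix.mul_assoc, ← Matrix.mul_assoc, hULs, one_mul]
  have hV : ∀ i, (U_Lᴴ *ᵥ u) i = ((y i : ℂ) * star (U_R β i)) / ((Real.sqrt s : ℝ) : ℂ) := by
    intro i
    have h1 : (U_Lᴴ *ᵥ u) i = (∑ k, U_Lᴴ i k * Y k β) / ((Real.sqrt s : ℝ) : ℂ) := by
      simp only [Matrix.mulVec, dotProduct]
      simp_rw [hu, ← mul_div_assoc]
      rw [← Finset.sum_div]
    rw [h1, ← Matrix.mul_apply, hDY, Matrix.diagonal_mul, Matrix.conjTranspose_apply]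
  have hsqrt : Real.sqrt s ^ 2 = s := Real.sq_sqrt hN.le
  have hVn : ∀ i, ‖(U_Lᴴ *ᵥ u) i‖^2 = (y i)^2 * a i / s := by
    intro i
    rw [hV i, norm_div, norm_mul, Complex.norm_real, Real.norm_eq_abs, norm_star,
      Complex.norm_real, Real.norm_eq_abs, abs_of_nonneg (Real.sqrt_nonneg s),
      div_pow, mul_pow, sq_abs, hsqrt]
  have hy1 : 0 ≤ y 1 := le_trans hy0 h01
  have hy2 : 0 < y 2 := by nlinarith [hy1.trans h12, sq_nonneg (y 1)]
  have hd : 0 < (y 2)^2 - 2*(y 1)^2 := by linarith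
  have hdd : 0 < ((y 2)^2 - 2*(y 1)^2) * (y 2)^2 := by positivity
  -- key bounds
  have ht : 3*(a 0 + a 1)*((y 2)^2 - (y 1)^2) ≤ 2*(y 2)^2 - (y 1)^2 := by
    nlinarith [h3s, hs, ha_sum, sq_nonneg (y 0),
      mul_nonneg ha0 (by nlinarith : (0:ℝ) ≤ (y 1)^2 - (y 0)^2)]
  have hkey : (a 0 + a 1) * ((y 2)^2 * ((y 2)^2 - 2*(y 1)^2)) ≤ (2*(y 2)^2 - (y 1)^2) * s := by
    have h1 : (y 2)^2 * (3*(a 0 + a 1)*((y 2)^2 - (y 1)^2)) ≤ (y 2)^2 * (2*(y 2)^2 - (y 1)^2) :=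
      mul_le_mul_of_nonneg_left ht (sq_nonneg (y 2))
    have h2 : (2*(y 2)^2 - (y 1)^2) * ((y 2)^2 * a 2) ≤ (2*(y 2)^2 - (y 1)^2) * s := by
      apply mul_le_mul_of_nonneg_left _ (by nlinarith : (0:ℝ) ≤ 2*(y 2)^2 - (y 1)^2)
      nlinarith [mul_nonneg (sq_nonneg (y 0)) ha0, mul_nonneg (sq_nonneg (y 1)) ha1]
    have ha2e : a 2 = 1 - a 0 - a 1 := by linarith
    rw [ha2e] at h2
    nlinarith [h1, h2]
  rw [hVn 0, hVn 1, hVn 2]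
  have hrw : ∀ c : ℝ, (2 * (y 2)^2 - (y 1)^2) / ((y 2)^2 - 2 * (y 1)^2) * (c / y 2)^2
      = ((2 * (y 2)^2 - (y 1)^2) * c^2) / (((y 2)^2 - 2*(y 1)^2) * (y 2)^2) := by
    intro c
    rw [div_pow, div_mul_div_comm]
  refine ⟨?_, ?_, ?_⟩
  · rw [hrw, div_le_div_iff₀ hN hdd]
    nlinarith [mul_le_mul_of_nonneg_left hkey (sq_nonneg (y 0)),
      mul_nonneg (mul_nonneg ha1 hdd.le) (sq_nonneg (y 0))]
  · rw [hrw, div_le_div_iff₀ hN hdd]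
    nlinarith [mul_le_mul_of_nonneg_left hkey (sq_nonneg (y 1)),
      mul_nonneg (mul_nonneg ha0 hdd.le) (sq_nonneg (y 1))]
  · rw [hrw]
    have hrw2 : 1 - (y 2)^2 * a 2 / s = ((y 0)^2 * a 0 + (y 1)^2 * a 1) / s := by
      field_simp
      linarith [hs]
    rw [hrw2, div_le_div_iff₀ hN hdd]
    nlinarith [mul_le_mul_of_nonneg_left hkey (sq_nonneg (y 1)),
      mul_nonneg (mul_nonneg ha0 hdd.le) (by nlinarith : (0:ℝ) ≤ (y 1)^2 - (y 0)^2)]
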